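/- Let ℒ : ℝ^d → ℝ be differentiable, L-smooth, with finite infimum ℒ* and satisfying the PL inequality with constant δ > 0. Let w ∈ ℝ^d and let G be a square-integrable random vector with E[G] = ∇ℒ(w) and E[‖G‖²] ≤ c_g(1 + c_h)‖∇ℒ(w)‖² + (2ασ_g²/(KB))·(ℒ(w) − ℒ*) + c_g σ_h², where c_g, c_h, α, σ_g, σ_h ≥ 0 and K, B ≥ 1. Then for any step size η with 0 < η ≤ 2/(L c_g (1 + c_h)), the update w' = w − ηG satisfies E[ℒ(w')] − ℒ* ≤ (1 − A₁)(ℒ(w) − ℒ*) + C₁, where A₁ = 2δη − Lδη²c_g(1 + c_h) − Lασ_g²η²/(KB) and C₁ = L c_g σ_h² η²/2. (One-step contraction for FedSGD under data heterogeneity.) -/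

import Mathlib

open MeasureTheory RealInnerProductSpace

/-- **One-step contraction for FedSGD under data heterogeneity.** For an `L`-smooth
differentiable `ℒ` with infimum `Lstar` satisfying the PL inequality with constant `δ`,
and an unbiased square-integrable stochastic gradient `G` whose second moment satisfies
the combined batch-noise/heterogeneity bound, the update `w - η G` contracts the
optimality gap: `E[ℒ(w')] - ℒ* ≤ (1 - A₁) (ℒ(w) - ℒ*) + C₁`. -/
theorem stmt_2 {d : ℕ} (ℒ : EuclideanSpace ℝ (Fin d) → ℝ) (L Lstar δ : ℝ)
    (hdiff : Differentiable ℝ ℒ)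
    (hsmooth : ∀ u v : EuclideanSpace ℝ (Fin d),
      ℒ v ≤ ℒ u + ⟪gradient ℒ u, v - u⟫ + L / 2 * ‖v - u‖ ^ 2)
    (hinf : IsGLB (Set.range ℒ) Lstar)
    (hδ : 0 < δ)
    (hPL : ∀ v : EuclideanSpace ℝ (Fin d), ‖gradient ℒ v‖ ^ 2 ≥ 2 * δ * (ℒ v - Lstar))
    (w : EuclideanSpace ℝ (Fin d))
    (c_g c_h α σ_g σ_h : ℝ) (hcg : 0 ≤ c_g) (hch : 0 ≤ c_h) (hα : 0 ≤ α)
    (hσg : 0 ≤ σ_g) (hσh : 0 ≤ σ_h)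
    (K B : ℕ) (hK : 1 ≤ K) (hB : 1 ≤ B)
    {Ω : Type*} [MeasurableSpace Ω] (P : Measure Ω) [IsProbabilityMeasure P]
    (G : Ω → EuclideanSpace ℝ (Fin d)) (hG2 : MemLp G 2 P)
    (hunbiased : ∫ ω, G ω ∂P = gradient ℒ w)
    (hsecond : ∫ ω, ‖G ω‖ ^ 2 ∂P ≤
      c_g * (1 + c_h) * ‖gradient ℒ w‖ ^ 2
        + (2 * α * σ_g ^ 2 / (K * B)) * (ℒ w - Lstar) + c_g * σ_h ^ 2)
    (η : ℝ) (hη0 : 0 < η) (hη : η ≤ 2 / (L * c_g * (1 + c_h))) :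
    (∫ ω, ℒ (w - η • G ω) ∂P) - Lstar ≤
      (1 - (2 * δ * η - L * δ * η ^ 2 * c_g * (1 + c_h) - L * α * σ_g ^ 2 * η ^ 2 / (K * B)))
          * (ℒ w - Lstar)
        + L * c_g * σ_h ^ 2 * η ^ 2 / 2 := by
  classical
  set g := gradient ℒ w with hg
  have hD : 0 < L * c_g * (1 + c_h) := by
    by_contra h
    push_neg at h
    have : (2 : ℝ) / (L * c_g * (1 + c_h)) ≤ 0 :=
      div_nonpos_of_nonneg_of_nonpos (by norm_num) h
    linarith
  have hch1 : (0:ℝ) < 1 + c_h := by linarith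
  have hL : 0 < L := by
    by_contra h
    push_neg at h
    nlinarith [mul_nonneg hcg hch1.le]
  have hηD : η * (L * c_g * (1 + c_h)) ≤ 2 := by
    rw [le_div_iff₀ hD] at hη; linarith
  have hγ0 : 0 ≤ ℒ w - Lstar := by
    have := hinf.1 ⟨w, rfl⟩; linarith
  have hPLw : ‖g‖ ^ 2 ≥ 2 * δ * (ℒ w - Lstar) := hPL w
  have hGm : AEStronglyMeasurable G P := hG2.aestronglyMeasurable
  have hGint : Integrable G P := hG2.integrable (by norm_num)
  have hsq : Integrable (fun ω => ‖G ω‖ ^ 2) P := hG2.norm.integrable_sq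
  have hip : Integrable (fun ω => ⟪g, G ω⟫) P := hGint.const_inner g
  set U : Ω → ℝ := fun ω => ℒ w - η * ⟪g, G ω⟫ + L / 2 * η ^ 2 * ‖G ω‖ ^ 2 with hU
  have hf1 : Integrable (fun ω => ℒ w - η * ⟪g, G ω⟫) P :=
    (integrable_const (ℒ w)).sub (hip.const_mul η)
  have hf2 : Integrable (fun ω => L / 2 * η ^ 2 * ‖G ω‖ ^ 2) P := hsq.const_mul _
  have hUint : Integrable U P := hf1.add hf2
  have hpt : ∀ ω, ℒ (w - η • G ω) ≤ U ω := by
    intro ω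
    have h := hsmooth w (w - η • G ω)
    have h1 : w - η • G ω - w = -(η • G ω) := by abel
    rw [h1] at h
    have h2 : ⟪g, -(η • G ω)⟫ = -(η * ⟪g, G ω⟫) := by
      rw [inner_neg_right, real_inner_smul_right]
    have h3 : ‖-(η • G ω)‖ ^ 2 = η ^ 2 * ‖G ω‖ ^ 2 := by
      rw [norm_neg, norm_smul, mul_pow]
      simp [abs_of_pos hη0, sq_abs]
    rw [h2, h3] at h
    simp only [hU]
    nlinarith [h]
  have hLm : AEStronglyMeasurable (fun ω => ℒ (w - η • G ω)) P := by
    exact hdiff.continuous.comp_aestronglyMeasurable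
      ((aestronglyMeasurable_const.sub (hGm.const_smul η)))
  have hlow : ∀ ω, Lstar ≤ ℒ (w - η • G ω) := fun ω => hinf.1 ⟨_, rfl⟩
  have hbound : Integrable (fun ω => |Lstar| + |U ω|) P :=
    (integrable_const |Lstar|).add hUint.abs
  have hLint : Integrable (fun ω => ℒ (w - η • G ω)) P := by
    refine Integrable.mono' hbound hLm ?_
    filter_upwards with ω
    rw [Real.norm_eq_abs, abs_le]
    constructor
    · linarith [hlow ω, neg_abs_le Lstar, abs_nonneg (U ω)]
    · linarith [hpt ω, le_abs_self (U ω), abs_nonneg Lstar]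
  have hintle : ∫ ω, ℒ (w - η • G ω) ∂P ≤ ∫ ω, U ω ∂P :=
    integral_mono hLint hUint hpt
  have hUval : ∫ ω, U ω ∂P
      = ℒ w - η * ‖g‖ ^ 2 + L / 2 * η ^ 2 * ∫ ω, ‖G ω‖ ^ 2 ∂P := by
    simp only [hU]
    rw [integral_add hf1 hf2, integral_sub (integrable_const (ℒ w)) (hip.const_mul η),
      integral_const, integral_const_mul, integral_const_mul, integral_inner hGint,
      hunbiased, real_inner_self_eq_norm_sq]
    simp
  have hnn : 0 ≤ L / 2 * η ^ 2 := by positivity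
  have hA : L / 2 * η ^ 2 * ∫ ω, ‖G ω‖ ^ 2 ∂P ≤ L / 2 * η ^ 2 *
      (c_g * (1 + c_h) * ‖g‖ ^ 2 + (2 * α * σ_g ^ 2 / (K * B)) * (ℒ w - Lstar)
        + c_g * σ_h ^ 2) :=
    mul_le_mul_of_nonneg_left hsecond hnn
  have hc : -η + L * η ^ 2 * c_g * (1 + c_h) / 2 ≤ 0 := by linarith [mul_le_mul_of_nonneg_left hηD hη0.le]
  have hB' : (-η + L * η ^ 2 * c_g * (1 + c_h) / 2) * ‖g‖ ^ 2 ≤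
      (-η + L * η ^ 2 * c_g * (1 + c_h) / 2) * (2 * δ * (ℒ w - Lstar)) :=
    mul_le_mul_of_nonpos_left hPLw hc
  have h5 : ∫ ω, ℒ (w - η • G ω) ∂P ≤ ℒ w - η * ‖g‖ ^ 2 + L / 2 * η ^ 2 *
      (c_g * (1 + c_h) * ‖g‖ ^ 2 + (2 * α * σ_g ^ 2 / (K * B)) * (ℒ w - Lstar)
        + c_g * σ_h ^ 2) := by
    rw [hUval] at hintle; linarith
  have e : ℒ w - η * ‖g‖ ^ 2 + L / 2 * η ^ 2 *
      (c_g * (1 + c_h) * ‖g‖ ^ 2 + (2 * α * σ_g ^ 2 / (K * B)) * (ℒ w - Lstar)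
        + c_g * σ_h ^ 2)
    - ((-η + L * η ^ 2 * c_g * (1 + c_h) / 2) * ‖g‖ ^ 2)
    + ((-η + L * η ^ 2 * c_g * (1 + c_h) / 2) * (2 * δ * (ℒ w - Lstar)))
    - Lstar =
      (1 - (2 * δ * η - L * δ * η ^ 2 * c_g * (1 + c_h) - L * α * σ_g ^ 2 * η ^ 2 / (K * B)))
          * (ℒ w - Lstar) + L * c_g * σ_h ^ 2 * η ^ 2 / 2 := by ring
  linarith [h5, hB', e]
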